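/- Let X ⊆ ℝ⁴ be a symplectic polytope. Then for every y ∈ frontier X, the Reeb cone R_y⁺X = {w ∈ ℝ⁴ : w ∈ T_y⁺X and −i·w ∈ N_y⁺X} is one-dimensional: it contains a nonzero vector, and any two of its elements are linearly dependent. (Proposition 1.3 of the paper: the combinatorial Reeb flow on the boundary of a four-dimensional symplectic polytope is well posed.) -/

import Mathlib

open RealInnerProductSpace

/-- The standard complex structure on ℝ⁴:
`i(x₁,x₂,y₁,y₂) = (−y₁,−y₂,x₁,x₂)`. -/
def Imap (v : EuclideanSpace ℝ (Fin 4)) : EuclideanSpace ℝ (Fin 4) :=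
  WithLp.toLp 2 ![-(v 2), -(v 3), v 0, v 1]

/-- The standard symplectic form on ℝ⁴: `ω₀(u,v) = ⟪i·u, v⟫`. -/
noncomputable def omega0 (u v : EuclideanSpace ℝ (Fin 4)) : ℝ := ⟪Imap u, v⟫

/-- The tangent cone `T_y⁺X`. -/
def tangentConePlus {m : ℕ} (X : Set (EuclideanSpace ℝ (Fin m)))
    (y : EuclideanSpace ℝ (Fin m)) : Set (EuclideanSpace ℝ (Fin m)) :=
  closure {v | ∃ ε : ℝ, 0 < ε ∧ y + ε • v ∈ X}

/-- The positive normal cone `N_y⁺X`. -/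
def normalConePlus {m : ℕ} (X : Set (EuclideanSpace ℝ (Fin m)))
    (y : EuclideanSpace ℝ (Fin m)) : Set (EuclideanSpace ℝ (Fin m)) :=
  {v | ∀ x ∈ X, ⟪x - y, v⟫ ≤ 0}

/-- The Reeb cone `R_y⁺X = T_y⁺X ∩ i·N_y⁺X`. -/
def reebConePlus (X : Set (EuclideanSpace ℝ (Fin 4)))
    (y : EuclideanSpace ℝ (Fin 4)) : Set (EuclideanSpace ℝ (Fin 4)) :=
  {w | w ∈ tangentConePlus X y ∧ -(Imap w) ∈ normalConePlus X y}

abbrev EE := EuclideanSpace ℝ (Fin 4)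

def ImapL : EE →ₗ[ℝ] EE where
  toFun := Imap
  map_add' x y := by
    ext i
    fin_cases i <;> (simp [Imap]; try ring)
  map_smul' a x := by
    ext i
    fin_cases i <;> (simp [Imap, mul_neg]; try ring)

lemma Imap_eq (v : EE) : Imap v = ImapL v := rfl

lemma Imap_Imap (v : EE) : Imap (Imap v) = -v := by
  ext i
  fin_cases i <;> (simp [Imap]; try ring)

lemma Imap_zero : Imap 0 = 0 := by rw [Imap_eq, map_zero]

lemma Imap_neg_Imap (w : EE) : Imap (-(Imap w)) = w := by
  rw [Imap_eq, map_neg, ← Imap_eq, Imap_Imap, neg_neg]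

lemma inner_Imap_self (v : EE) : ⟪Imap v, v⟫ = 0 := by
  simp [PiLp.inner_apply, Imap, Fin.sum_univ_four]
  ring

lemma inner_Imap_swap (u v : EE) : ⟪Imap u, v⟫ = -⟪Imap v, u⟫ := by
  simp [PiLp.inner_apply, Imap, Fin.sum_univ_four]
  ring

section Skew

lemma skew_sum_zero {ι : Type*} [Fintype ι] (M : ι → ι → ℝ)
    (hM : ∀ i j, M i j = - M j i) (t : ι → ℝ) :
    ∑ j, ∑ i, t j * M j i * t i = 0 := by
  have h : (∑ j, ∑ i, t j * M j i * t i) = - ∑ j, ∑ i, t j * M j i * t i := by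
    conv_lhs => rw [Finset.sum_comm]
    rw [← Finset.sum_neg_distrib]
    refine Finset.sum_congr rfl fun a _ => ?_
    rw [← Finset.sum_neg_distrib]
    refine Finset.sum_congr rfl fun b _ => ?_
    rw [hM b a]; ring
  linarith

lemma skew_game {ι : Type} [Fintype ι] [Nonempty ι] (M : ι → ι → ℝ)
    (hM : ∀ i j, M i j = - M j i) :
    ∃ t : ι → ℝ, (∀ i, 0 ≤ t i) ∧ (∑ i, t i = 1) ∧
      ∀ j, (∑ i, M j i * t i) ≤ 0 := by
  classical
  by_contra hno
  push_neg at hno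
  set Φ : (ι → ℝ) →ₗ[ℝ] (ι → ℝ) := Matrix.mulVecLin (Matrix.of M) with hΦ
  have hΦapp : ∀ t : ι → ℝ, ∀ j, Φ t j = ∑ i, M j i * t i := by
    intro t j
    simp [hΦ, Matrix.mulVecLin_apply, Matrix.mulVec, dotProduct]
  set s : Set (ι → ℝ) := Φ '' (stdSimplex ℝ ι) with hs
  set T : Set (ι → ℝ) := {x | ∀ j, x j ≤ 0} with hT
  have hdisj : Disjoint s T := by
    rw [Set.disjoint_left]
    rintro x ⟨t, ht, rfl⟩ hxT
    obtain ⟨j, hj⟩ := hno t ht.1 ht.2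
    have := hxT j
    rw [hΦapp] at this
    linarith
  have hconv : Convex ℝ s := (convex_stdSimplex ℝ ι).linear_image Φ
  have hcomp : IsCompact s :=
    (isCompact_stdSimplex ℝ ι).image Φ.continuous_of_finiteDimensional
  have hTclosed : IsClosed T := by
    have : T = ⋂ j, {x : ι → ℝ | x j ≤ 0} := by ext x; simp [hT]
    rw [this]
    exact isClosed_iInter fun j => isClosed_le (continuous_apply j) continuous_const
  have hTconv : Convex ℝ T := by
    intro x hx y hy a b ha hb hab
    intro j
    have hxj := hx j
    have hyj := hy j
    simp only [Pi.add_apply, Pi.smul_apply, smul_eq_mul]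
    nlinarith
  obtain ⟨f, u, v, hfs, huv, hfT⟩ :=
    geometric_hahn_banach_compact_closed hconv hcomp hTconv hTclosed hdisj
  have hv0 : v < 0 := by
    have h0T : (0 : ι → ℝ) ∈ T := fun j => le_refl 0
    have := hfT 0 h0T
    rwa [map_zero] at this
  have hexp : ∀ x : ι → ℝ, f x = ∑ j, x j * f (Pi.single j 1) := by
    intro x
    have hx : x = ∑ j, x j • (Pi.single j 1 : ι → ℝ) := by
      funext k
      simp [Finset.sum_apply, Pi.single_apply]
    conv_lhs => rw [hx]
    rw [map_sum]
    simp [map_smul, smul_eq_mul]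
  have hfe : ∀ j, f (Pi.single j 1) ≤ 0 := by
    intro j
    by_contra hq
    push_neg at hq
    set r : ℝ := (-v + 1) / f (Pi.single j 1) with hr
    have hrpos : 0 < r := by
      apply div_pos _ hq
      linarith
    have hbT : (-r) • (Pi.single j 1 : ι → ℝ) ∈ T := by
      intro k
      simp only [Pi.smul_apply, smul_eq_mul, Pi.single_apply]
      by_cases hkj : k = j
      · rw [if_pos hkj, mul_one]
        linarith
      · rw [if_neg hkj, mul_zero]
    have := hfT _ hbT
    rw [map_smul, smul_eq_mul] at this
    have hfne : f (Pi.single j 1) ≠ 0 := ne_of_gt hq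
    rw [hr, neg_mul, div_mul_cancel₀ _ hfne] at this
    linarith
  set t0 : ι → ℝ := fun j => -f (Pi.single j 1) with ht0
  have ht0nn : ∀ j, 0 ≤ t0 j := fun j => by simp [ht0]; linarith [hfe j]
  have ht0ne : ∃ j, 0 < t0 j := by
    by_contra hz
    push_neg at hz
    have hzero : ∀ j, t0 j = 0 := fun j => le_antisymm (hz j) (ht0nn j)
    have hf0 : ∀ x, f x = 0 := by
      intro x
      rw [hexp x]
      apply Finset.sum_eq_zero
      intro j _
      have : f (Pi.single j 1) = 0 := by
        have := hzero j
        simp [ht0] at this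
        linarith
      rw [this, mul_zero]
    obtain ⟨i0⟩ := (inferInstance : Nonempty ι)
    have hmem : Φ (Pi.single i0 1) ∈ s := ⟨_, single_mem_stdSimplex ℝ i0, rfl⟩
    have := hfs _ hmem
    rw [hf0] at this
    linarith
  have hσpos : 0 < ∑ j, t0 j := by
    obtain ⟨j0, hj0⟩ := ht0ne
    exact Finset.sum_pos' (fun j _ => ht0nn j) ⟨j0, Finset.mem_univ _, hj0⟩
  set σ : ℝ := ∑ j, t0 j with hσ
  set t' : ι → ℝ := fun j => t0 j / σ with ht'
  have ht'Δ : t' ∈ stdSimplex ℝ ι := by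
    constructor
    · intro j
      exact div_nonneg (ht0nn j) (le_of_lt hσpos)
    · rw [ht']
      rw [← Finset.sum_div]
      exact div_self (ne_of_gt hσpos)
  have hmem : Φ t' ∈ s := ⟨_, ht'Δ, rfl⟩
  have hkey : f (Φ t') = 0 := by
    rw [hexp]
    have : ∀ j, (Φ t') j * f (Pi.single j 1) = -(σ * (t' j * (Φ t') j)) := by
      intro j
      have h1 : f (Pi.single j 1) = -t0 j := by simp [ht0]
      have h2 : t0 j = σ * t' j := by
        rw [ht']
        field_simp
      rw [h1, h2]; ring
    rw [Finset.sum_congr rfl (fun j _ => this j)]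
    rw [Finset.sum_neg_distrib, ← Finset.mul_sum]
    have hS : ∑ j, t' j * (Φ t') j = 0 := by
      have : ∀ j, t' j * (Φ t') j = ∑ i, t' j * M j i * t' i := by
        intro j
        rw [hΦapp, Finset.mul_sum]
        exact Finset.sum_congr rfl fun i _ => by ring
      rw [Finset.sum_congr rfl (fun j _ => this j)]
      exact skew_sum_zero M hM t'
    rw [hS, mul_zero, neg_zero]
  have := hfs _ hmem
  rw [hkey] at this
  linarith

end Skew

section Poly

variable {N : ℕ} {n : Fin N → EE} {c : Fin N → ℝ} {X : Set EE}

lemma memX (hX : X = ⋂ i, {x : EE | ⟪x, n i⟫ ≤ c i}) (x : EE) :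
    x ∈ X ↔ ∀ i, ⟪x, n i⟫ ≤ c i := by subst hX; simp

lemma X_closed (hX : X = ⋂ i, {x : EE | ⟪x, n i⟫ ≤ c i}) : IsClosed X := by
  subst hX
  exact isClosed_iInter fun i =>
    isClosed_le (continuous_id.inner continuous_const) continuous_const

lemma strict_nbhd (n : Fin N → EE) (c : Fin N → ℝ) (y : EE) (P : Fin N → Prop)
    (hy : ∀ i, P i → ⟪y, n i⟫ < c i) :
    ∃ r > 0, ∀ z : EE, dist z y < r → ∀ i, P i → ⟪z, n i⟫ < c i := by
  classical
  set U : Set EE := ⋂ i, {x : EE | P i → ⟪x, n i⟫ < c i} with hU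
  have hUopen : IsOpen U := by
    refine isOpen_iInter_of_finite fun i => ?_
    by_cases hP : P i
    · have : {x : EE | P i → ⟪x, n i⟫ < c i} = {x : EE | ⟪x, n i⟫ < c i} := by
        ext x; simp [hP]
      rw [this]
      exact isOpen_lt (continuous_id.inner continuous_const) continuous_const
    · have : {x : EE | P i → ⟪x, n i⟫ < c i} = Set.univ :=
        Set.eq_univ_of_forall (fun x h' => absurd h' hP)
      rw [this]; exact isOpen_univ
  have hyU : y ∈ U := by
    simp only [hU, Set.mem_iInter, Set.mem_setOf_eq]
    exact hy
  obtain ⟨r, hr, hball⟩ := Metric.isOpen_iff.1 hUopen y hyU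
  refine ⟨r, hr, fun z hz i hP => ?_⟩
  have := hball (Metric.mem_ball.2 hz)
  simp only [hU, Set.mem_iInter, Set.mem_setOf_eq] at this
  exact this i hP

lemma tangent_eq (hX : X = ⋂ i, {x : EE | ⟪x, n i⟫ ≤ c i}) (y : EE) (hy : y ∈ X) :
    tangentConePlus X y = {v : EE | ∀ i, ⟪y, n i⟫ = c i → ⟪v, n i⟫ ≤ 0} := by
  apply Set.Subset.antisymm
  · apply closure_minimal
    · rintro v ⟨ε, hε, hmem⟩ i hact
      rw [memX hX] at hmem
      have h1 := hmem i
      rw [inner_add_left, real_inner_smul_left, hact] at h1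
      nlinarith
    · have : {v : EE | ∀ i, ⟪y, n i⟫ = c i → ⟪v, n i⟫ ≤ 0}
          = ⋂ i, {v : EE | ⟪y, n i⟫ = c i → ⟪v, n i⟫ ≤ 0} := by
        ext v; simp
      rw [this]
      refine isClosed_iInter fun i => ?_
      by_cases hact : ⟪y, n i⟫ = c i
      · have : {v : EE | ⟪y, n i⟫ = c i → ⟪v, n i⟫ ≤ 0} = {v : EE | ⟪v, n i⟫ ≤ 0} := by
          ext v; simp [hact]
        rw [this]
        exact isClosed_le (continuous_id.inner continuous_const) continuous_const
      · have : {v : EE | ⟪y, n i⟫ = c i → ⟪v, n i⟫ ≤ 0} = Set.univ :=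
          Set.eq_univ_of_forall (fun v h' => absurd h' hact)
        rw [this]; exact isClosed_univ
  · intro v hv
    obtain ⟨r, hr, hball⟩ := strict_nbhd n c y (fun i => ⟪y, n i⟫ ≠ c i)
      (fun i hi => lt_of_le_of_ne ((memX hX y).1 hy i) hi)
    apply subset_closure
    set ε : ℝ := r / (2 * (‖v‖ + 1)) with hε
    have hvn : (0:ℝ) < ‖v‖ + 1 := by positivity
    have hεpos : 0 < ε := by positivity
    refine ⟨ε, hεpos, ?_⟩
    have hdist : dist (y + ε • v) y < r := by
      rw [dist_eq_norm, add_sub_cancel_left, norm_smul, Real.norm_eq_abs,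
        abs_of_pos hεpos]
      calc ε * ‖v‖ < ε * (‖v‖ + 1) := by nlinarith
        _ = r / 2 := by rw [hε]; field_simp
        _ < r := by linarith
    rw [memX hX]
    intro i
    by_cases hact : ⟪y, n i⟫ = c i
    · rw [inner_add_left, real_inner_smul_left, hact]
      have := hv i hact
      nlinarith
    · exact le_of_lt (hball _ hdist i hact)

lemma polar_pair {y m v : EE} (hm : m ∈ normalConePlus X y)
    (hv : v ∈ tangentConePlus X y) : ⟪v, m⟫ ≤ 0 := by
  have hsub : {v : EE | ∃ ε : ℝ, 0 < ε ∧ y + ε • v ∈ X} ⊆ {v : EE | ⟪v, m⟫ ≤ 0} := by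
    rintro v ⟨ε, hε, hmem⟩
    simp only [Set.mem_setOf_eq]
    have := hm _ hmem
    rw [add_sub_cancel_left, real_inner_smul_left] at this
    by_contra hcon
    push_neg at hcon
    nlinarith
  have hcl : IsClosed {v : EE | ⟪v, m⟫ ≤ 0} :=
    isClosed_le (continuous_id.inner continuous_const) continuous_const
  exact closure_minimal hsub hcl hv

lemma frontier_iff (hX : X = ⋂ i, {x : EE | ⟪x, n i⟫ ≤ c i})
    (hn : ∀ i, n i ≠ 0) (y : EE) :
    y ∈ frontier X ↔ y ∈ X ∧ ∃ i, ⟪y, n i⟫ = c i := by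
  rw [(X_closed hX).frontier_eq, Set.mem_diff]
  constructor
  · rintro ⟨hyX, hyI⟩
    refine ⟨hyX, ?_⟩
    by_contra hno
    push_neg at hno
    obtain ⟨r, hr, hball⟩ := strict_nbhd n c y (fun _ => True)
      (fun i _ => lt_of_le_of_ne ((memX hX y).1 hyX i) (hno i))
    exact hyI (mem_interior.2 ⟨Metric.ball y r, fun z hz => (memX hX z).2
      (fun i => le_of_lt (hball z (Metric.mem_ball.1 hz) i trivial)),
      Metric.isOpen_ball, Metric.mem_ball_self hr⟩)
  · rintro ⟨hyX, i, hact⟩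
    refine ⟨hyX, fun hyI => ?_⟩
    obtain ⟨r, hr, hball⟩ := Metric.isOpen_iff.1 isOpen_interior y hyI
    have hni : (0:ℝ) < ‖n i‖ := norm_pos_iff.2 (hn i)
    set z : EE := y + (r / (2 * ‖n i‖)) • n i with hz
    have hzX : z ∈ X := by
      apply interior_subset
      apply hball
      rw [Metric.mem_ball, dist_eq_norm, hz, add_sub_cancel_left, norm_smul,
        Real.norm_eq_abs, abs_of_pos (by positivity)]
      have h2 : r / (2 * ‖n i‖) * ‖n i‖ = r / 2 := by field_simp
      rw [h2]; linarith
    have := (memX hX z).1 hzX i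
    rw [hz, inner_add_left, real_inner_smul_left, hact,
      real_inner_self_eq_norm_sq] at this
    have hpos : 0 < r / (2 * ‖n i‖) * ‖n i‖ ^ 2 := by positivity
    linarith

lemma c_pos (hX : X = ⋂ i, {x : EE | ⟪x, n i⟫ ≤ c i}) (hn : ∀ i, n i ≠ 0)
    (h0 : (0 : EE) ∈ interior X) (i : Fin N) : 0 < c i := by
  obtain ⟨r, hr, hball⟩ := Metric.isOpen_iff.1 isOpen_interior 0 h0
  have hni : (0:ℝ) < ‖n i‖ := norm_pos_iff.2 (hn i)
  set z : EE := (0 : EE) + (r / (2 * ‖n i‖)) • n i with hz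
  have hzX : z ∈ X := by
    apply interior_subset
    apply hball
    rw [Metric.mem_ball, dist_eq_norm, hz, zero_add, sub_zero, norm_smul,
      Real.norm_eq_abs, abs_of_pos (by positivity)]
    have h2 : r / (2 * ‖n i‖) * ‖n i‖ = r / 2 := by field_simp
    rw [h2]; linarith
  have := (memX hX z).1 hzX i
  rw [hz, inner_add_left, real_inner_smul_left, inner_zero_left,
    real_inner_self_eq_norm_sq] at this
  have hpos : 0 < r / (2 * ‖n i‖) * ‖n i‖ ^ 2 := by positivity
  linarith

end Poly


set_option maxHeartbeats 1000000 in
/-- Proposition 1.3: for a symplectic polytope `X ⊆ ℝ⁴` (a convex polytope with `0` in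
its interior, none of whose 2-faces is Lagrangian), the Reeb cone at every boundary
point is one-dimensional: it contains a nonzero vector, and any two of its elements
are linearly dependent. -/
theorem reebCone_one_dimensional {N : ℕ}
    (n : Fin N → EuclideanSpace ℝ (Fin 4)) (c : Fin N → ℝ)
    (hn : ∀ i, n i ≠ 0)
    (X : Set (EuclideanSpace ℝ (Fin 4)))
    (hX : X = ⋂ i, {x | ⟪x, n i⟫ ≤ c i})
    (hcomp : IsCompact X)
    (h0 : (0 : EuclideanSpace ℝ (Fin 4)) ∈ interior X)
    (hsymp : ∀ y ∈ frontier X, ∀ L : Submodule ℝ (EuclideanSpace ℝ (Fin 4)),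
      (L : Set (EuclideanSpace ℝ (Fin 4))) =
        tangentConePlus X y ∩ -(tangentConePlus X y) →
      Module.finrank ℝ L = 2 →
      ∃ u ∈ L, ∃ v ∈ L, omega0 u v ≠ 0) :
    ∀ y ∈ frontier X,
      (∃ w ∈ reebConePlus X y, w ≠ 0) ∧
      (∀ w₁ ∈ reebConePlus X y, ∀ w₂ ∈ reebConePlus X y,
        ∃ a b : ℝ, (a ≠ 0 ∨ b ≠ 0) ∧ a • w₁ + b • w₂ = 0) := by
  classical
  intro y hy
  obtain ⟨hyX, i0, hi0⟩ := (frontier_iff hX hn y).1 hy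
  constructor
  -- ### Existence ###
  · set ι : Type := {i : Fin N // ⟪y, n i⟫ = c i} with hι
    haveI : Nonempty ι := ⟨⟨i0, hi0⟩⟩
    obtain ⟨t, htnn, htsum, hgame⟩ :=
      skew_game (ι := ι) (fun j i => ⟪Imap (n i.1), n j.1⟫)
        (fun i j => inner_Imap_swap _ _)
    set m : EE := ∑ i : ι, t i • n i.1 with hm
    have hIm : Imap m = ∑ i : ι, t i • Imap (n i.1) := by
      rw [Imap_eq, map_sum]
      simp only [map_smul]
      rfl
    refine ⟨Imap m, ⟨?_, ?_⟩, ?_⟩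
    · -- tangent cone membership
      rw [tangent_eq hX y hyX]
      intro i hact
      have hexp : ⟪Imap m, n i⟫ = ∑ i' : ι, ⟪Imap (n i'.1), n i⟫ * t i' := by
        rw [hIm, sum_inner]
        exact Finset.sum_congr rfl fun i' _ => by
          rw [real_inner_smul_left]; ring
      rw [hexp]
      exact hgame ⟨i, hact⟩
    · -- normal cone membership
      rw [Imap_Imap, neg_neg]
      intro x hx
      rw [inner_sum]
      apply Finset.sum_nonpos
      intro i _
      rw [real_inner_smul_right, inner_sub_left]
      have h1 : ⟪x, n i.1⟫ ≤ c i.1 := (memX hX x).1 hx i.1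
      have h2 : ⟪y, n i.1⟫ = c i.1 := i.2
      have := htnn i
      nlinarith
    · -- nonzero
      intro hzero
      have hm0 : m = 0 := by
        have h1 := Imap_Imap m
        rw [hzero, Imap_zero] at h1
        exact neg_eq_zero.1 h1.symm
      have hy_m : ⟪y, m⟫ = ∑ i : ι, t i * c i.1 := by
        rw [hm, inner_sum]
        exact Finset.sum_congr rfl fun i _ => by
          rw [real_inner_smul_right, i.2]
      have hexpos : ∃ j : ι, 0 < t j := by
        by_contra hno
        push_neg at hno
        have : ∑ i : ι, t i ≤ 0 := Finset.sum_nonpos fun i _ => hno i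
        rw [htsum] at this; linarith
      obtain ⟨j, hj⟩ := hexpos
      have hpos : 0 < ∑ i : ι, t i * c i.1 :=
        Finset.sum_pos' (fun i _ => mul_nonneg (htnn i) (c_pos hX hn h0 i.1).le)
          ⟨j, Finset.mem_univ _, mul_pos hj (c_pos hX hn h0 j.1)⟩
      rw [hm0, inner_zero_right] at hy_m
      linarith
  -- ### Uniqueness ###
  · intro w₁ hw₁ w₂ hw₂
    by_cases hdep : ∃ a b : ℝ, (a ≠ 0 ∨ b ≠ 0) ∧ a • w₁ + b • w₂ = 0
    · exact hdep
    exfalso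
    have hindep : ∀ a b : ℝ, a • w₁ + b • w₂ = 0 → a = 0 ∧ b = 0 := by
      intro a b hab
      by_contra hcon
      exact hdep ⟨a, b, not_and_or.1 hcon, hab⟩
    have hw1T : ∀ i, ⟪y, n i⟫ = c i → ⟪w₁, n i⟫ ≤ 0 := by
      have := hw₁.1; rwa [tangent_eq hX y hyX] at this
    have hw2T : ∀ i, ⟪y, n i⟫ = c i → ⟪w₂, n i⟫ ≤ 0 := by
      have := hw₂.1; rwa [tangent_eq hX y hyX] at this
    -- the symplectic pairing of the two Reeb vectors vanishes
    have homega : ⟪Imap w₁, w₂⟫ = 0 := by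
      have h12 := polar_pair hw₁.2 hw₂.1
      have h21 := polar_pair hw₂.2 hw₁.1
      rw [inner_neg_right, real_inner_comm] at h12 h21
      rw [inner_Imap_swap] at h21
      linarith
    set v : EE := w₁ + w₂ with hv
    have hvm1 : ⟪v, -(Imap w₁)⟫ = 0 := by
      have e1 : ⟪w₁, Imap w₁⟫ = 0 := by rw [real_inner_comm]; exact inner_Imap_self w₁
      have e2 : ⟪w₂, Imap w₁⟫ = 0 := by rw [real_inner_comm]; exact homega
      rw [inner_neg_right, hv, inner_add_left, e1, e2]; ring
    have hvm2 : ⟪v, -(Imap w₂)⟫ = 0 := by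
      have e1 : ⟪w₂, Imap w₂⟫ = 0 := by rw [real_inner_comm]; exact inner_Imap_self w₂
      have e2 : ⟪w₁, Imap w₂⟫ = 0 := by
        rw [real_inner_comm, inner_Imap_swap, homega, neg_zero]
      rw [inner_neg_right, hv, inner_add_left, e2, e1]; ring
    set A' : Fin N → Prop :=
      fun i => ⟪y, n i⟫ = c i ∧ ⟪w₁, n i⟫ = 0 ∧ ⟪w₂, n i⟫ = 0 with hA'def
    set K : Submodule ℝ EE := Submodule.span ℝ (n '' {i | A' i}) with hK
    have hKperp_iff : ∀ z : EE, z ∈ Kᗮ ↔ ∀ i, A' i → ⟪n i, z⟫ = 0 := by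
      intro z
      constructor
      · intro hz i hA'
        exact (Submodule.mem_orthogonal K z).1 hz _
          (Submodule.subset_span ⟨i, hA', rfl⟩)
      · intro hz
        rw [Submodule.mem_orthogonal]
        intro u hu
        refine Submodule.span_induction (p := fun x _ => ⟪x, z⟫ = 0)
          ?_ ?_ ?_ ?_ hu
        · rintro x ⟨i, hA', rfl⟩; exact hz i hA'
        · simp
        · intro a b _ _ ha hb; rw [inner_add_left, ha, hb, add_zero]
        · intro r a _ ha; rw [real_inner_smul_left, ha, mul_zero]
    -- perturbation argument: any normal vector orthogonal to v is orthogonal to Kᗮ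
    have hzperp : ∀ z ∈ Kᗮ, ∀ m : EE, m ∈ normalConePlus X y →
        ⟪v, m⟫ = 0 → ⟪z, m⟫ = 0 := by
      intro z hz m hmN hvm
      have hside : ∀ i, (⟪y, n i⟫ = c i ∧ ¬ A' i) → ⟪v, n i⟫ < (fun _ => (0:ℝ)) i := by
        rintro i ⟨hact, hnA⟩
        have h12 : ¬(⟪w₁, n i⟫ = 0 ∧ ⟪w₂, n i⟫ = 0) := fun h => hnA ⟨hact, h⟩
        have ha := hw1T i hact
        have hb := hw2T i hact
        rw [hv, inner_add_left]
        rcases not_and_or.1 h12 with h | h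
        · have := lt_of_le_of_ne ha h; simp only []; linarith
        · have := lt_of_le_of_ne hb h; simp only []; linarith
      obtain ⟨r, hr, hball⟩ := strict_nbhd n (fun _ => (0:ℝ)) v
        (fun i => ⟪y, n i⟫ = c i ∧ ¬ A' i) hside
      set δ : ℝ := r / (2 * (‖z‖ + 1)) with hδ
      have hzn : (0:ℝ) < ‖z‖ + 1 := by positivity
      have hδpos : 0 < δ := by positivity
      have hzin : ∀ s : ℝ, |s| ≤ δ → v + s • z ∈ tangentConePlus X y := by
        intro s hs
        rw [tangent_eq hX y hyX]
        intro i hact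
        by_cases hA' : A' i
        · have hz_i : ⟪n i, z⟫ = 0 := (hKperp_iff z).1 hz i hA'
          have hz_i' : ⟪z, n i⟫ = 0 := by rw [real_inner_comm]; exact hz_i
          rw [inner_add_left, real_inner_smul_left, hz_i',
            mul_zero, add_zero, hv, inner_add_left, hA'.2.1, hA'.2.2]
          norm_num
        · have hd : dist (v + s • z) v < r := by
            rw [dist_eq_norm, add_sub_cancel_left, norm_smul, Real.norm_eq_abs]
            have h1 : |s| * ‖z‖ ≤ δ * ‖z‖ :=
              mul_le_mul_of_nonneg_right hs (norm_nonneg z)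
            have h2 : δ * (‖z‖ + 1) = r / 2 := by rw [hδ]; field_simp
            nlinarith
          exact (hball _ hd i ⟨hact, hA'⟩).le
      have h1 := polar_pair hmN (hzin δ (by rw [abs_of_pos hδpos]))
      have h2 := polar_pair hmN (hzin (-δ) (by rw [abs_neg, abs_of_pos hδpos]))
      rw [inner_add_left, real_inner_smul_left, hvm] at h1 h2
      have hle : ⟪z, m⟫ ≤ 0 := by nlinarith
      have hge : (0:ℝ) ≤ ⟪z, m⟫ := by nlinarith
      linarith
    have hm1K : -(Imap w₁) ∈ K := by
      have hmem : -(Imap w₁) ∈ Kᗮᗮ :=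
        (Submodule.mem_orthogonal Kᗮ _).2 fun z hz => hzperp z hz _ hw₁.2 hvm1
      rwa [Submodule.orthogonal_orthogonal] at hmem
    have hm2K : -(Imap w₂) ∈ K := by
      have hmem : -(Imap w₂) ∈ Kᗮᗮ :=
        (Submodule.mem_orthogonal Kᗮ _).2 fun z hz => hzperp z hz _ hw₂.2 hvm2
      rwa [Submodule.orthogonal_orthogonal] at hmem
    have hw1Kp : w₁ ∈ Kᗮ := (hKperp_iff w₁).2 fun i hA' => by
      rw [real_inner_comm]; exact hA'.2.1
    have hw2Kp : w₂ ∈ Kᗮ := (hKperp_iff w₂).2 fun i hA' => by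
      rw [real_inner_comm]; exact hA'.2.2
    have hLI : LinearIndependent ℝ ![w₁, w₂] := LinearIndependent.pair_iff.2 hindep
    have hrange : Set.range ![w₁, w₂] = ({w₁, w₂} : Set EE) := by
      simp only [Matrix.range_cons, Matrix.range_empty, Set.union_empty,
        Set.union_singleton]
      exact Set.pair_comm w₂ w₁
    set P : Submodule ℝ EE := Submodule.span ℝ ({w₁, w₂} : Set EE) with hP
    have hPfin : Module.finrank ℝ P = 2 := by
      rw [hP, ← hrange, finrank_span_eq_card hLI]
      simp
    have hPle : P ≤ Kᗮ := by
      rw [hP, Submodule.span_le]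
      rintro x (rfl | rfl)
      · exact hw1Kp
      · exact hw2Kp
    have h2le : 2 ≤ Module.finrank ℝ Kᗮ := hPfin ▸ Submodule.finrank_mono hPle
    have hsum : Module.finrank ℝ K + Module.finrank ℝ Kᗮ = 4 := by
      rw [Submodule.finrank_add_finrank_orthogonal]
      exact finrank_euclideanSpace_fin
    by_cases hK2 : Module.finrank ℝ K = 2
    · -- 2-face case: contradict the symplectic hypothesis
      have hKp2 : Module.finrank ℝ Kᗮ = 2 := by omega
      have hPK : P = Kᗮ :=
        Submodule.eq_of_le_of_finrank_le hPle (by omega)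
      obtain ⟨r, hr, hball⟩ := strict_nbhd n c y (fun i => ⟪y, n i⟫ ≠ c i)
        (fun i hi => lt_of_le_of_ne ((memX hX y).1 hyX i) hi)
      set ε : ℝ := r / (2 * (‖v‖ + 1)) with hε
      have hvp : (0:ℝ) < ‖v‖ + 1 := by positivity
      have hεpos : 0 < ε := by positivity
      have hdist : dist (y + ε • v) y < r := by
        rw [dist_eq_norm, add_sub_cancel_left, norm_smul, Real.norm_eq_abs,
          abs_of_pos hεpos]
        have h2 : ε * (‖v‖ + 1) = r / 2 := by rw [hε]; field_simp
        nlinarith [norm_nonneg v]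
      have hy'X : y + ε • v ∈ X := by
        rw [memX hX]
        intro i
        by_cases hact : ⟪y, n i⟫ = c i
        · rw [inner_add_left, real_inner_smul_left, hact]
          have h1 := hw1T i hact
          have h2 := hw2T i hact
          have : ⟪v, n i⟫ ≤ 0 := by rw [hv, inner_add_left]; linarith
          nlinarith
        · exact (hball _ hdist i hact).le
      have hact' : ∀ i, ⟪y + ε • v, n i⟫ = c i ↔ A' i := by
        intro i
        constructor
        · intro h
          by_cases hact : ⟪y, n i⟫ = c i
          · have h1 := hw1T i hact
            have h2 := hw2T i hact
            rw [inner_add_left, real_inner_smul_left, hact, hv, inner_add_left] at h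
            have hxx : ⟪w₁, n i⟫ + ⟪w₂, n i⟫ = 0 := by
              have : ε * (⟪w₁, n i⟫ + ⟪w₂, n i⟫) = 0 := by linarith
              rcases mul_eq_zero.1 this with h' | h'
              · exact absurd h' (ne_of_gt hεpos)
              · exact h'
            exact ⟨hact, by linarith, by linarith⟩
          · exact absurd h (ne_of_lt (hball _ hdist i hact))
        · intro hA'
          have hv_i : ⟪v, n i⟫ = 0 := by
            rw [hv, inner_add_left, hA'.2.1, hA'.2.2]; ring
          rw [inner_add_left, real_inner_smul_left, hA'.1, hv_i]; ring
      have hA'ne : ∃ i, A' i := by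
        by_contra hno
        push_neg at hno
        have : {i : Fin N | A' i} = ∅ := Set.eq_empty_of_forall_notMem hno
        rw [hK] at hK2
        rw [this, Set.image_empty, Submodule.span_empty] at hK2
        simp at hK2
      obtain ⟨i1, hi1⟩ := hA'ne
      have hy'front : y + ε • v ∈ frontier X :=
        (frontier_iff hX hn _).2 ⟨hy'X, i1, (hact' i1).2 hi1⟩
      have hsetEq : (Kᗮ : Set EE) =
          tangentConePlus X (y + ε • v) ∩ -(tangentConePlus X (y + ε • v)) := by
        rw [tangent_eq hX _ hy'X]
        ext z
        simp only [Set.mem_inter_iff, Set.mem_neg, Set.mem_setOf_eq,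
          SetLike.mem_coe]
        rw [hKperp_iff]
        constructor
        · intro h
          constructor
          · intro i hacti
            rw [real_inner_comm]
            exact (h i ((hact' i).1 hacti)).le
          · intro i hacti
            rw [inner_neg_left, real_inner_comm]
            have := h i ((hact' i).1 hacti)
            linarith
        · rintro ⟨h1, h2⟩ i hA'
          have ha := h1 i ((hact' i).2 hA')
          have hb := h2 i ((hact' i).2 hA')
          rw [inner_neg_left] at hb
          rw [real_inner_comm]
          linarith
      obtain ⟨u, huK, u', hu'K, hne⟩ := hsymp _ hy'front Kᗮ hsetEq hKp2
      rw [← hPK, hP] at huK hu'K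
      obtain ⟨a, b, hab⟩ := Submodule.mem_span_pair.1 huK
      obtain ⟨a', b', hab'⟩ := Submodule.mem_span_pair.1 hu'K
      apply hne
      rw [← hab, ← hab']
      have hIexp : Imap (a • w₁ + b • w₂) = a • Imap w₁ + b • Imap w₂ := by
        rw [Imap_eq, map_add, map_smul, map_smul]; rfl
      have hsw : ⟪Imap w₂, w₁⟫ = 0 := by
        rw [inner_Imap_swap, homega, neg_zero]
      show ⟪Imap (a • w₁ + b • w₂), a' • w₁ + b' • w₂⟫ = 0
      rw [hIexp, inner_add_left, inner_add_right, inner_add_right,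
        real_inner_smul_left, real_inner_smul_left, real_inner_smul_left,
        real_inner_smul_left, real_inner_smul_right, real_inner_smul_right,
        real_inner_smul_right, real_inner_smul_right,
        inner_Imap_self, inner_Imap_self, homega, hsw]
      ring
    · -- the normal directions are parallel: contradiction with independence
      have hKle1 : Module.finrank ℝ K ≤ 1 := by omega
      by_cases hm0 : -(Imap w₁) = 0
      · have hw10 : w₁ = 0 := by
          rw [← Imap_neg_Imap w₁, hm0, Imap_zero]
        have := (hindep 1 0 (by rw [hw10]; simp)).1
        exact one_ne_zero this
      · have hsle : Submodule.span ℝ ({-(Imap w₁)} : Set EE) ≤ K := by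
          rw [Submodule.span_le, Set.singleton_subset_iff]
          exact hm1K
        have heq : Submodule.span ℝ ({-(Imap w₁)} : Set EE) = K :=
          Submodule.eq_of_le_of_finrank_le hsle
            (by rw [finrank_span_singleton hm0]; exact hKle1)
        have hm2mem : -(Imap w₂) ∈ Submodule.span ℝ ({-(Imap w₁)} : Set EE) := by
          rw [heq]; exact hm2K
        obtain ⟨μ, hμ⟩ := Submodule.mem_span_singleton.1 hm2mem
        have hw2eq : w₂ = μ • w₁ := by
          have := congrArg Imap hμ
          rw [Imap_neg_Imap] at this
          rw [← this, Imap_eq, map_smul, ← Imap_eq, Imap_neg_Imap]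
        have := (hindep μ (-1) (by rw [hw2eq]; module)).2
        norm_num at this
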